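/- Let L be a positive integer and let D = ⋃_{a ∈ {0,1}ⁿ} R_{a,n} ⊆ ℝⁿ. Then nⁿ times the n-dimensional Lebesgue volume of D ∩ {x ∈ ℝⁿ : L − 1/2 < x_n < L + 1/2} equals the number of bit vectors a ∈ {0,1}ⁿ with ∑_{i=1}^{n} a_i s_i = L (equivalently, the number of subsets of the indices {1,…,n} whose corresponding integers s_i sum to L). -/

import Mathlib

open MeasureTheory
open scoped ENNReal

noncomputable section

/-- The chain region `R_{a,k} ⊆ ℝᵏ` : the set of points `(x₁,…,x_k)` with
`a₁s₁ − 1/(2n) < x₁ < a₁s₁ + 1/(2n)` and, for `2 ≤ i ≤ k`,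
`x_{i−1} + a_i s_i − 1/(2n) < x_i < x_{i−1} + a_i s_i + 1/(2n)`
(indices here are 0-based). -/
def chainRegion (n k : ℕ) (hk : k ≤ n) (s : Fin n → ℕ) (a : Fin n → Bool) :
    Set (Fin k → ℝ) :=
  {x | ∀ i : Fin k,
    (if 0 < (i : ℕ) then x ⟨(i : ℕ) - 1, Nat.lt_of_le_of_lt (Nat.sub_le _ _) i.isLt⟩ else 0) +
        (if a (Fin.castLE hk i) then (s (Fin.castLE hk i) : ℝ) else 0) - 1 / (2 * (n : ℝ))
      < x i ∧
    x i <
      (if 0 < (i : ℕ) then x ⟨(i : ℕ) - 1, Nat.lt_of_le_of_lt (Nat.sub_le _ _) i.isLt⟩ else 0) +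
        (if a (Fin.castLE hk i) then (s (Fin.castLE hk i) : ℝ) else 0) + 1 / (2 * (n : ℝ))}

namespace ChainAux

/-- the offset vector `a_i s_i`. -/
def dvec (n : ℕ) (s : Fin n → ℕ) (a : Fin n → Bool) : Fin n → ℝ :=
  fun i => if a i then (s i : ℝ) else 0

/-- the difference linear map `x ↦ (x_i - x_{i-1})`. -/
def Tlin (n : ℕ) : (Fin n → ℝ) →ₗ[ℝ] (Fin n → ℝ) :=
  LinearMap.pi fun i => LinearMap.proj i -
    (if 0 < (i : ℕ) then
      (LinearMap.proj (⟨(i : ℕ) - 1, Nat.lt_of_le_of_lt (Nat.sub_le _ _) i.isLt⟩ : Fin n) :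
        (Fin n → ℝ) →ₗ[ℝ] ℝ) else 0)

lemma Tlin_apply {n : ℕ} (x : Fin n → ℝ) (i : Fin n) :
    Tlin n x i = x i -
      (if 0 < (i : ℕ) then x ⟨(i : ℕ) - 1, Nat.lt_of_le_of_lt (Nat.sub_le _ _) i.isLt⟩ else 0) := by
  by_cases h : 0 < (i : ℕ) <;> simp [Tlin, h]

lemma det_Tlin {n : ℕ} : LinearMap.det (Tlin n) = 1 := by
  rw [← LinearMap.det_toMatrix']
  rw [Matrix.det_of_lowerTriangular]
  · refine Finset.prod_eq_one fun i _ => ?_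
    rw [LinearMap.toMatrix'_apply, Tlin_apply]
    by_cases h : 0 < (i : ℕ)
    · have : (⟨(i : ℕ) - 1, Nat.lt_of_le_of_lt (Nat.sub_le _ _) i.isLt⟩ : Fin n) ≠ i :=
        Fin.ne_of_val_ne (show (i : ℕ) - 1 ≠ (i : ℕ) by omega)
      simp [h, this]
    · simp [h]
  · intro i j hij
    have hij' : (i : ℕ) < (j : ℕ) := hij
    rw [LinearMap.toMatrix'_apply, Tlin_apply]
    have h1 : i ≠ j := by intro hc; rw [hc] at hij'; omega
    by_cases h : 0 < (i : ℕ)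
    · have : (⟨(i : ℕ) - 1, Nat.lt_of_le_of_lt (Nat.sub_le _ _) i.isLt⟩ : Fin n) ≠ j :=
        Fin.ne_of_val_ne (show (i : ℕ) - 1 ≠ (j : ℕ) by omega)
      simp [h, h1, this]
    · simp [h, h1]


def pibox (n : ℕ) : Set (Fin n → ℝ) :=
  Set.univ.pi fun _ => Set.Ioo (-(1 / (2 * (n : ℝ)))) (1 / (2 * (n : ℝ)))

lemma chainRegion_eq {n : ℕ} (s : Fin n → ℕ) (a : Fin n → Bool) :
    chainRegion n n le_rfl s a
      = (fun x => Tlin n x - dvec n s a) ⁻¹' pibox n := by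
  ext x
  simp only [chainRegion, pibox, Set.mem_setOf_eq, Set.mem_preimage, Set.mem_pi, Set.mem_univ,
    true_implies, Set.mem_Ioo, Pi.sub_apply, Tlin_apply]
  refine forall_congr' fun i => ?_
  have hc : Fin.castLE le_rfl i = i := rfl
  rw [hc]
  set p := (if 0 < (i : ℕ) then x ⟨(i : ℕ) - 1, Nat.lt_of_le_of_lt (Nat.sub_le _ _) i.isLt⟩ else 0)
  have hd : dvec n s a i = (if a i then (s i : ℝ) else 0) := rfl
  rw [hd]
  set q := (if a i then (s i : ℝ) else 0)
  constructor <;> rintro ⟨h1, h2⟩ <;> constructor <;> linarith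

def Xfun (n : ℕ) (x : Fin n → ℝ) (k : ℕ) : ℝ :=
  if h : k - 1 < n ∧ 0 < k then x ⟨k - 1, h.1⟩ else 0

lemma sum_Tlin {n : ℕ} (hn : 0 < n) (x : Fin n → ℝ) :
    ∑ i, Tlin n x i = x ⟨n - 1, Nat.sub_lt hn one_pos⟩ := by
  have hterm : ∀ i : Fin n, Tlin n x i = Xfun n x ((i : ℕ) + 1) - Xfun n x (i : ℕ) := by
    intro i
    rw [Tlin_apply]
    have h1 : Xfun n x ((i : ℕ) + 1) = x ⟨(i : ℕ), i.isLt⟩ := by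
      unfold Xfun
      rw [dif_pos ⟨by omega, by omega⟩]
      rfl
    have h2 : Xfun n x (i : ℕ) =
        (if 0 < (i : ℕ) then x ⟨(i : ℕ) - 1, Nat.lt_of_le_of_lt (Nat.sub_le _ _) i.isLt⟩ else 0) := by
      unfold Xfun
      by_cases h : 0 < (i : ℕ)
      · rw [dif_pos ⟨by omega, h⟩, if_pos h]
      · rw [dif_neg (by omega), if_neg h]
    rw [h1, h2]
  rw [Finset.sum_congr rfl fun i _ => hterm i]
  rw [Fin.sum_univ_eq_sum_range (fun k => Xfun n x (k + 1) - Xfun n x k) n, Finset.sum_range_sub]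
  have hX0 : Xfun n x 0 = 0 := by unfold Xfun; rw [dif_neg (by omega)]
  have hXn : Xfun n x n = x ⟨n - 1, Nat.sub_lt hn one_pos⟩ := by
    unfold Xfun; rw [dif_pos ⟨Nat.sub_lt hn one_pos, hn⟩]
  rw [hX0, hXn, sub_zero]

def dnat (n : ℕ) (s : Fin n → ℕ) (a : Fin n → Bool) (j : ℕ) : ℝ :=
  if h : j < n then dvec n s a ⟨j, h⟩ else 0

def Q (n : ℕ) (s : Fin n → ℕ) (a : Fin n → Bool) (m : ℕ) : ℝ :=
  ∑ j ∈ Finset.range (m + 1), dnat n s a j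

lemma mem_bound {n : ℕ} {s : Fin n → ℕ} {a : Fin n → Bool} {x : Fin n → ℝ}
    (hx : x ∈ chainRegion n n le_rfl s a) :
    ∀ m, ∀ h : m < n,
      Q n s a m - ((m : ℝ) + 1) / (2 * n) < x ⟨m, h⟩ ∧
      x ⟨m, h⟩ < Q n s a m + ((m : ℝ) + 1) / (2 * n) := by
  intro m
  induction m with
  | zero =>
    intro h
    have hc := hx ⟨0, h⟩
    simp only [Nat.lt_irrefl, if_false] at hc
    have hQ : Q n s a 0 = dnat n s a 0 := by
      unfold Q; rw [Finset.sum_range_one]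
    have hd : dnat n s a 0 = (if a (Fin.castLE le_rfl (⟨0, h⟩ : Fin n)) then
        (s (Fin.castLE le_rfl (⟨0, h⟩ : Fin n)) : ℝ) else 0) := by
      unfold dnat; rw [dif_pos h]; rfl
    rw [hQ, hd]
    push_cast
    constructor <;> [linarith [hc.1]; linarith [hc.2]]
  | succ m ih =>
    intro h
    have hm : m < n := by omega
    obtain ⟨ih1, ih2⟩ := ih hm
    have hc := hx ⟨m + 1, h⟩
    have hpos : 0 < ((⟨m + 1, h⟩ : Fin n) : ℕ) := Nat.succ_pos m
    rw [if_pos hpos] at hc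
    have hprev : x (⟨((⟨m + 1, h⟩ : Fin n) : ℕ) - 1,
        Nat.lt_of_le_of_lt (Nat.sub_le _ _) (⟨m + 1, h⟩ : Fin n).isLt⟩ : Fin n) = x ⟨m, hm⟩ := rfl
    rw [hprev] at hc
    have hQ : Q n s a (m + 1) = Q n s a m + dnat n s a (m + 1) := by
      unfold Q; rw [Finset.sum_range_succ]
    have hd : dnat n s a (m + 1) = (if a (Fin.castLE le_rfl (⟨m + 1, h⟩ : Fin n)) then
        (s (Fin.castLE le_rfl (⟨m + 1, h⟩ : Fin n)) : ℝ) else 0) := by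
      unfold dnat; rw [dif_pos h]; rfl
    rw [hQ, hd]
    set w := (if a (Fin.castLE le_rfl (⟨m + 1, h⟩ : Fin n)) then
        (s (Fin.castLE le_rfl (⟨m + 1, h⟩ : Fin n)) : ℝ) else 0)
    have hring : ((m : ℝ) + 1 + 1) / (2 * n) = ((m : ℝ) + 1) / (2 * n) + 1 / (2 * n) := by
      ring
    push_cast
    rw [hring]
    constructor <;> [linarith [hc.1]; linarith [hc.2]]

lemma chain_disjoint {n : ℕ} {s : Fin n → ℕ} (hs : ∀ i, 0 < s i) {a b : Fin n → Bool}
    (hab : a ≠ b) :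
    Disjoint (chainRegion n n le_rfl s a) (chainRegion n n le_rfl s b) := by
  classical
  rw [Set.disjoint_left]
  intro x hxa hxb
  have hex : ∃ m, ∃ h : m < n, a ⟨m, h⟩ ≠ b ⟨m, h⟩ := by
    rcases Function.ne_iff.1 hab with ⟨i, hi⟩
    exact ⟨(i : ℕ), i.isLt, hi⟩
  set m₀ := Nat.find hex with hm₀def
  obtain ⟨hm₀n, hne⟩ := Nat.find_spec hex
  -- sums agree below m₀
  have hagree : ∀ j, j < m₀ → dnat n s a j = dnat n s b j := by
    intro j hj
    unfold dnat
    by_cases hjn : j < n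
    · rw [dif_pos hjn, dif_pos hjn]
      have : a ⟨j, hjn⟩ = b ⟨j, hjn⟩ := by
        by_contra hcon
        exact Nat.find_min hex hj ⟨hjn, hcon⟩
      unfold dvec
      rw [this]
    · rw [dif_neg hjn, dif_neg hjn]
  have hQdiff : Q n s a m₀ - Q n s b m₀ = dnat n s a m₀ - dnat n s b m₀ := by
    unfold Q
    rw [← Finset.sum_sub_distrib]
    refine Finset.sum_eq_single_of_mem m₀ (Finset.self_mem_range_succ m₀) ?_
    intro j hjmem hjne
    have hj : j < m₀ := by
      have := Finset.mem_range.1 hjmem; omega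
    rw [hagree j hj, sub_self]
  have hdnm : dnat n s a m₀ - dnat n s b m₀ =
      (if a ⟨m₀, hm₀n⟩ then (s ⟨m₀, hm₀n⟩ : ℝ) else 0) -
      (if b ⟨m₀, hm₀n⟩ then (s ⟨m₀, hm₀n⟩ : ℝ) else 0) := by
    unfold dnat dvec; rw [dif_pos hm₀n, dif_pos hm₀n]
  have hsep : (1 : ℝ) ≤ |Q n s a m₀ - Q n s b m₀| := by
    rw [hQdiff, hdnm]
    have h1 : (1 : ℝ) ≤ (s ⟨m₀, hm₀n⟩ : ℝ) := by
      exact_mod_cast hs ⟨m₀, hm₀n⟩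
    cases ha : a ⟨m₀, hm₀n⟩ <;> cases hb : b ⟨m₀, hm₀n⟩ <;>
      simp_all [abs_of_nonneg, abs_of_nonpos] <;>
      rw [abs_of_nonpos (by linarith)] <;> linarith
  have hba := mem_bound hxa m₀ hm₀n
  have hbb := mem_bound hxb m₀ hm₀n
  have hn0 : (0 : ℝ) < n := by
    have : 0 < n := by omega
    exact_mod_cast this
  have he : ((m₀ : ℝ) + 1) / (2 * n) ≤ 1 / 2 := by
    rw [div_le_div_iff₀ (by linarith) (by norm_num)]
    have : (m₀ : ℝ) + 1 ≤ n := by exact_mod_cast hm₀n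
    linarith
  rcases abs_cases (Q n s a m₀ - Q n s b m₀) with ⟨heq, _⟩ | ⟨heq, _⟩ <;> rw [heq] at hsep <;>
    linarith [hba.1, hba.2, hbb.1, hbb.2]

def Ebox (n : ℕ) (L : ℕ) (S : ℝ) : Set (Fin n → ℝ) :=
  pibox n ∩ {y | (L : ℝ) - 1 / 2 < (∑ i, y i) + S ∧ (∑ i, y i) + S < (L : ℝ) + 1 / 2}

lemma inter_slab_eq {n : ℕ} (hn : 0 < n) (s : Fin n → ℕ) (a : Fin n → Bool) (L : ℕ) :
    chainRegion n n le_rfl s a ∩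
      {x : Fin n → ℝ | (L : ℝ) - 1 / 2 < x ⟨n - 1, Nat.sub_lt hn one_pos⟩ ∧
        x ⟨n - 1, Nat.sub_lt hn one_pos⟩ < (L : ℝ) + 1 / 2}
    = (fun x => Tlin n x - dvec n s a) ⁻¹' Ebox n L (∑ i, dvec n s a i) := by
  rw [chainRegion_eq]
  ext x
  have hsum : (∑ i, (Tlin n x - dvec n s a) i) + ∑ i, dvec n s a i
      = x ⟨n - 1, Nat.sub_lt hn one_pos⟩ := by
    simp only [Pi.sub_apply]
    rw [Finset.sum_sub_distrib, sub_add_cancel, sum_Tlin hn]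
  simp only [Set.mem_inter_iff, Set.mem_preimage, Ebox, Set.mem_setOf_eq, hsum]

lemma volume_preimage {n : ℕ} (d : Fin n → ℝ) (F : Set (Fin n → ℝ)) :
    volume ((fun x => Tlin n x - d) ⁻¹' F) = volume F := by
  have h1 : (fun x => Tlin n x - d) ⁻¹' F = Tlin n ⁻¹' ((fun z => z + (-d)) ⁻¹' F) := by
    ext x; simp [sub_eq_add_neg]
  rw [h1, Measure.addHaar_preimage_linearMap volume (by rw [det_Tlin]; norm_num),
    det_Tlin, measure_preimage_add_right]
  norm_num

lemma phi_measurable {n : ℕ} (d : Fin n → ℝ) :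
    Measurable (fun x : Fin n → ℝ => Tlin n x - d) :=
  (((Tlin n).continuous_of_finiteDimensional).sub continuous_const).measurable

lemma Ebox_measurable {n : ℕ} (L : ℕ) (S : ℝ) : MeasurableSet (Ebox n L S) := by
  apply MeasurableSet.inter
  · exact MeasurableSet.univ_pi fun i => measurableSet_Ioo
  · have hg : Measurable fun y : Fin n → ℝ => (∑ i, y i) + S :=
      (Finset.measurable_sum Finset.univ fun i _ => measurable_pi_apply i).add_const S
    have heq : {y : Fin n → ℝ | (L : ℝ) - 1 / 2 < (∑ i, y i) + S ∧ (∑ i, y i) + S < (L : ℝ) + 1 / 2}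
        = (fun y : Fin n → ℝ => (∑ i, y i) + S) ⁻¹' Set.Ioo ((L : ℝ) - 1 / 2) ((L : ℝ) + 1 / 2) :=
      rfl
    rw [heq]
    exact hg measurableSet_Ioo

lemma volume_pibox {n : ℕ} (hn : 0 < n) :
    volume (pibox n) = (ENNReal.ofReal (1 / (n : ℝ))) ^ n := by
  have hn0 : (0 : ℝ) < n := by exact_mod_cast hn
  rw [pibox, volume_pi_pi]
  have hlen : (1 / (2 * (n : ℝ))) - (-(1 / (2 * (n : ℝ)))) = 1 / (n : ℝ) := by
    rw [sub_neg_eq_add, ← add_div]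
    rw [show ((1 : ℝ) + 1) = 2 by norm_num]
    rw [eq_div_iff hn0.ne']
    field_simp
  simp only [Real.volume_Ioo, hlen, Finset.prod_const, Finset.card_univ, Fintype.card_fin]

lemma Ebox_eq_pibox {n : ℕ} (hn : 0 < n) (L : ℕ) : Ebox n L ((L : ℕ) : ℝ) = pibox n := by
  haveI : Nonempty (Fin n) := ⟨⟨0, hn⟩⟩
  have hn0 : (0 : ℝ) < n := by exact_mod_cast hn
  refine Set.Subset.antisymm Set.inter_subset_left fun y hy => ?_
  have hy' : ∀ i : Fin n, -(1 / (2 * (n : ℝ))) < y i ∧ y i < 1 / (2 * (n : ℝ)) := by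
    intro i
    exact hy i (Set.mem_univ i)
  have hhalf : ∑ i : Fin n, (1 / (2 * (n : ℝ))) = 1 / 2 := by
    rw [Finset.sum_const, Finset.card_univ, Fintype.card_fin, nsmul_eq_mul]
    field_simp
  have hub : ∑ i, y i < 1 / 2 := by
    rw [← hhalf]
    exact Finset.sum_lt_sum_of_nonempty Finset.univ_nonempty fun i _ => (hy' i).2
  have hlb : -(1 / 2) < ∑ i, y i := by
    have : ∑ i : Fin n, (-(1 / (2 * (n : ℝ)))) < ∑ i, y i :=
      Finset.sum_lt_sum_of_nonempty Finset.univ_nonempty fun i _ => (hy' i).1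
    rw [Finset.sum_neg_distrib, hhalf] at this
    exact this
  exact ⟨hy, by constructor <;> linarith⟩

lemma Ebox_empty {n : ℕ} (hn : 0 < n) (L N : ℕ) (hne : N ≠ L) : Ebox n L ((N : ℕ) : ℝ) = ∅ := by
  haveI : Nonempty (Fin n) := ⟨⟨0, hn⟩⟩
  have hn0 : (0 : ℝ) < n := by exact_mod_cast hn
  refine Set.eq_empty_iff_forall_notMem.2 fun y hy' => ?_
  obtain ⟨hy, hcond⟩ := hy'
  have hy' : ∀ i : Fin n, -(1 / (2 * (n : ℝ))) < y i ∧ y i < 1 / (2 * (n : ℝ)) := by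
    intro i
    exact hy i (Set.mem_univ i)
  have hhalf : ∑ i : Fin n, (1 / (2 * (n : ℝ))) = 1 / 2 := by
    rw [Finset.sum_const, Finset.card_univ, Fintype.card_fin, nsmul_eq_mul]
    field_simp
  have hub : ∑ i, y i < 1 / 2 := by
    rw [← hhalf]
    exact Finset.sum_lt_sum_of_nonempty Finset.univ_nonempty fun i _ => (hy' i).2
  have hlb : -(1 / 2) < ∑ i, y i := by
    have : ∑ i : Fin n, (-(1 / (2 * (n : ℝ)))) < ∑ i, y i :=
      Finset.sum_lt_sum_of_nonempty Finset.univ_nonempty fun i _ => (hy' i).1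
    rw [Finset.sum_neg_distrib, hhalf] at this
    exact this
  rcases lt_or_gt_of_ne hne with h | h
  · have hcast : (N : ℝ) + 1 ≤ L := by exact_mod_cast h
    linarith [hcond.1]
  · have hcast : (L : ℝ) + 1 ≤ N := by exact_mod_cast h
    linarith [hcond.2]

lemma sum_dvec_cast {n : ℕ} (s : Fin n → ℕ) (a : Fin n → Bool) :
    ∑ i, dvec n s a i = ((∑ i, if a i then s i else 0 : ℕ) : ℝ) := by
  rw [Nat.cast_sum]
  refine Finset.sum_congr rfl fun i _ => ?_
  simp [dvec, apply_ite (fun m : ℕ => (m : ℝ))]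

end ChainAux

/-- Theorem 1 reduction correctness: let `L` be a positive integer and
`D = ⋃_{a ∈ {0,1}ⁿ} R_{a,n}`. Then `nⁿ · volume (D ∩ {L − 1/2 < x_n < L + 1/2})` equals the
number of bit vectors `a ∈ {0,1}ⁿ` with `∑ a_i s_i = L`. -/
theorem chainRegion_counts_subset_sums (n : ℕ) (hn : 0 < n) (s : Fin n → ℕ)
    (hs : ∀ i, 0 < s i) (L : ℕ) (hL : 0 < L) :
    (n : ℝ≥0∞) ^ n *
      volume ((⋃ a : Fin n → Bool, chainRegion n n le_rfl s a) ∩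
        {x : Fin n → ℝ | (L : ℝ) - 1 / 2 < x ⟨n - 1, Nat.sub_lt hn one_pos⟩ ∧
          x ⟨n - 1, Nat.sub_lt hn one_pos⟩ < (L : ℝ) + 1 / 2})
    = ((Finset.univ.filter
        (fun a : Fin n → Bool => (∑ i : Fin n, if a i then s i else 0) = L)).card : ℝ≥0∞) := by
  classical
  set v : ℝ≥0∞ := (ENNReal.ofReal (1 / (n : ℝ))) ^ n with hv
  rw [Set.iUnion_inter]
  rw [measure_iUnion
    (fun a b hab => Disjoint.mono Set.inter_subset_left Set.inter_subset_left
      (ChainAux.chain_disjoint hs hab))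
    (fun a => by
      rw [ChainAux.inter_slab_eq hn s a L]
      exact ChainAux.phi_measurable _ (ChainAux.Ebox_measurable L _))]
  rw [tsum_fintype]
  have hterm : ∀ a : Fin n → Bool,
      volume (chainRegion n n le_rfl s a ∩
        {x : Fin n → ℝ | (L : ℝ) - 1 / 2 < x ⟨n - 1, Nat.sub_lt hn one_pos⟩ ∧
          x ⟨n - 1, Nat.sub_lt hn one_pos⟩ < (L : ℝ) + 1 / 2})
      = if (∑ i : Fin n, if a i then s i else 0) = L then v else 0 := by
    intro a
    rw [ChainAux.inter_slab_eq hn s a L, ChainAux.volume_preimage, ChainAux.sum_dvec_cast]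
    by_cases hNL : (∑ i : Fin n, if a i then s i else 0) = L
    · rw [if_pos hNL, hNL, ChainAux.Ebox_eq_pibox hn L, ChainAux.volume_pibox hn]
    · rw [if_neg hNL, ChainAux.Ebox_empty hn L _ hNL, measure_empty]
  rw [Finset.sum_congr rfl fun a _ => hterm a]
  rw [Finset.sum_ite, Finset.sum_const, Finset.sum_const_zero, add_zero, nsmul_eq_mul]
  have hone : (n : ℝ≥0∞) ^ n * v = 1 := by
    rw [hv, ← mul_pow]
    have hmul : (n : ℝ≥0∞) * ENNReal.ofReal (1 / (n : ℝ)) = 1 := by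
      rw [one_div, ENNReal.ofReal_inv_of_pos (by exact_mod_cast hn), ENNReal.ofReal_natCast]
      exact ENNReal.mul_inv_cancel (by exact_mod_cast hn.ne') (ENNReal.natCast_ne_top n)
    rw [hmul, one_pow]
  calc (n : ℝ≥0∞) ^ n * (((Finset.univ.filter
        (fun a : Fin n → Bool => (∑ i : Fin n, if a i then s i else 0) = L)).card : ℝ≥0∞) * v)
      = (((Finset.univ.filter
        (fun a : Fin n → Bool => (∑ i : Fin n, if a i then s i else 0) = L)).card : ℝ≥0∞)) *
          ((n : ℝ≥0∞) ^ n * v) := by ring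
    _ = _ := by rw [hone, mul_one]
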